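/- Let f : [0,1]^m → ℝ≥0 be a function and let f̂ = conv(f) be its convex hull. Then: (1) f̂(x) ≤ f(x) for all x ∈ [0,1]^m; (2) f̂ is convex; (3) if f is monotone then f̂ is monotone; (4) if f is MLC then f̂ is continuous. -/

import Mathlib

open Pointwise

noncomputable section

/-- The unit cube `[0,1]^m` in `Fin m → ℝ`. -/
def cube (m : ℕ) : Set (Fin m → ℝ) := Set.Icc 0 1

/-- The lower limit of `f` at `x₀` relative to the domain `D`:
`sup_{δ > 0} inf_{x ∈ D, ‖x - x₀‖_∞ ≤ δ} f x` (computed in the extended reals). -/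
def lowerLim {E : Type*} [SeminormedAddCommGroup E] (D : Set E) (f : E → ℝ) (x₀ : E) : EReal :=
  ⨆ δ : {δ : ℝ // 0 < δ}, ⨅ x : {x : E // x ∈ D ∧ ‖x - x₀‖ ≤ δ.1}, (f x.1 : EReal)

/-- `f` is lower-continuous on `D`. -/
def LowerContOn {E : Type*} [SeminormedAddCommGroup E] (D : Set E) (f : E → ℝ) : Prop :=
  ∀ x₀ ∈ D, lowerLim D f x₀ = (f x₀ : EReal)

/-- The epigraph of `f` relative to the domain `D`:
`{(x, y) : x ∈ D, y ≥ f x}`. -/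
def epigraph {E : Type*} (D : Set E) (f : E → ℝ) : Set (E × ℝ) :=
  {q | q.1 ∈ D ∧ f q.1 ≤ q.2}

/-- The convex hull of a function: `conv(f)(x) = inf {y : (x,y) ∈ conv(epi f)}`. -/
def funConvHull {E : Type*} [AddCommGroup E] [Module ℝ E] (D : Set E) (f : E → ℝ) : E → ℝ :=
  fun x => sInf {y : ℝ | (x, y) ∈ convexHull ℝ (epigraph D f)}

theorem myIsCompact_convexHull {F : Type} [NormedAddCommGroup F] [NormedSpace ℝ F]
    [FiniteDimensional ℝ F] {K : Set F} (hK : IsCompact K) : IsCompact (convexHull ℝ K) := by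
  classical
  rcases K.eq_empty_or_nonempty with rfl | ⟨z₀, hz₀⟩
  · simpa [convexHull_empty] using isCompact_empty
  set n := Module.finrank ℝ F + 1 with hn
  have hT : IsCompact ((stdSimplex ℝ (Fin n)) ×ˢ (Set.univ.pi fun _ : Fin n => K)) :=
    (isCompact_stdSimplex ℝ _).prod (isCompact_univ_pi fun _ => hK)
  have hg : Continuous (fun p : (Fin n → ℝ) × (Fin n → F) => ∑ i, p.1 i • p.2 i) :=
    continuous_finset_sum _ fun i _ =>
      ((continuous_apply i).comp continuous_fst).smul ((continuous_apply i).comp continuous_snd)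
  have himg : (fun p : (Fin n → ℝ) × (Fin n → F) => ∑ i, p.1 i • p.2 i) ''
      ((stdSimplex ℝ (Fin n)) ×ˢ (Set.univ.pi fun _ : Fin n => K)) = convexHull ℝ K := by
    apply Set.Subset.antisymm
    · rintro _ ⟨⟨w, v⟩, ⟨hw, hv⟩, rfl⟩
      exact (convex_convexHull ℝ K).sum_mem (fun i _ => hw.1 i) hw.2
        (fun i _ => subset_convexHull ℝ K (hv i (Set.mem_univ i)))
    · intro x hx
      obtain ⟨ι, hι, z, w, hzK, hai, hwpos, hwsum, hxx⟩ :=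
        eq_pos_convex_span_of_mem_convexHull hx
      letI := hι
      have hcard : Fintype.card ι ≤ n := by
        refine le_trans hai.card_le_finrank_succ ?_
        exact Nat.add_le_add_right (Submodule.finrank_le _) 1
      obtain ⟨e⟩ : Nonempty (ι ↪ Fin n) := by
        rw [Function.Embedding.nonempty_iff_card_le, Fintype.card_fin]; exact hcard
      have key : ∀ {M : Type} [inst : AddCommMonoid M] (φ : Fin n → M),
          (∀ j, ¬(∃ i, e i = j) → φ j = 0) → ∑ j, φ j = ∑ i, φ (e i) := by
        intro M _ φ hφ
        rw [← Finset.sum_map Finset.univ e φ]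
        refine (Finset.sum_subset (Finset.subset_univ _) ?_).symm
        intro j _ hj
        refine hφ j ?_
        simpa using hj
      have hw'0 : ∀ j, ¬(∃ i, e i = j) → Function.extend (⇑e) w 0 j = 0 := by
        intro j hj; rw [Function.extend_apply' _ _ _ hj]; rfl
      refine ⟨(Function.extend (⇑e) w 0, Function.extend (⇑e) z fun _ => z₀),
        ⟨⟨?_, ?_⟩, ?_⟩, ?_⟩
      · intro j
        show 0 ≤ Function.extend (⇑e) w 0 j
        by_cases h : ∃ i, e i = j
        · obtain ⟨i, rfl⟩ := h
          rw [e.injective.extend_apply]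
          exact (hwpos i).le
        · rw [hw'0 j h]
      · show (∑ j : Fin n, Function.extend (⇑e) w 0 j) = 1
        rw [key _ hw'0]
        simp only [e.injective.extend_apply]
        exact hwsum
      · intro j _
        show Function.extend (⇑e) z (fun _ => z₀) j ∈ K
        by_cases h : ∃ i, e i = j
        · obtain ⟨i, rfl⟩ := h
          rw [e.injective.extend_apply]
          exact hzK (Set.mem_range_self i)
        · rw [Function.extend_apply' _ _ _ h]
          exact hz₀
      · show (∑ j : Fin n, Function.extend (⇑e) w 0 j • Function.extend (⇑e) z (fun _ => z₀) j) = x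
        rw [key (fun j => Function.extend (⇑e) w 0 j • Function.extend (⇑e) z (fun _ => z₀) j)
          (fun j hj => by simp only [hw'0 j hj, zero_smul])]
        simp only [e.injective.extend_apply]
        exact hxx
  rw [← himg]
  exact hT.image hg

theorem stmt2 (m : ℕ) (f : (Fin m → ℝ) → ℝ) (hf_nonneg : ∀ x ∈ cube m, 0 ≤ f x) :
    (∀ x ∈ cube m, funConvHull (cube m) f x ≤ f x) ∧
    ConvexOn ℝ (cube m) (funConvHull (cube m) f) ∧
    (MonotoneOn f (cube m) → MonotoneOn (funConvHull (cube m) f) (cube m)) ∧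
    (MonotoneOn f (cube m) → LowerContOn (cube m) f →
      ContinuousOn (funConvHull (cube m) f) (cube m)) := by
  classical
  set S := convexHull ℝ (epigraph (cube m) f) with hSdef
  have hgdef : ∀ x, funConvHull (cube m) f x = sInf {y | (x, y) ∈ S} := fun x => rfl
  have h0 : S ⊆ (cube m) ×ˢ (Set.Ici (0:ℝ)) :=
    convexHull_min (fun q hq => ⟨hq.1, le_trans (hf_nonneg _ hq.1) hq.2⟩)
      ((convex_Icc _ _).prod (convex_Ici _))
  have hne : ∀ x ∈ cube m, (x, f x) ∈ S := fun x hx =>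
    subset_convexHull ℝ _ (show (x, f x) ∈ epigraph (cube m) f from ⟨hx, le_refl _⟩)
  have hbdd : ∀ x : Fin m → ℝ, BddBelow {y | (x, y) ∈ S} :=
    fun x => ⟨0, fun y hy => (h0 hy).2⟩
  have hfib_le : ∀ (x : Fin m → ℝ) (y : ℝ), (x, y) ∈ S → funConvHull (cube m) f x ≤ y :=
    fun x y hy => csInf_le (hbdd x) hy
  have hgle : ∀ x ∈ cube m, funConvHull (cube m) f x ≤ f x := fun x hx =>
    hfib_le x (f x) (hne x hx)
  have hg0 : ∀ x ∈ cube m, 0 ≤ funConvHull (cube m) f x := fun x hx =>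
    le_csInf ⟨f x, hne x hx⟩ (fun y hy => (h0 hy).2)
  -- upward closedness of S
  have hup : ∀ (x : Fin m → ℝ) (y t : ℝ), (x, y) ∈ S → 0 ≤ t → (x, y + t) ∈ S := by
    intro x y t hxy ht
    have hsub : epigraph (cube m) f + {((0 : Fin m → ℝ), t)} ⊆ epigraph (cube m) f := by
      rw [Set.add_singleton]
      rintro _ ⟨q, hq, rfl⟩
      refine ⟨?_, ?_⟩
      · show q.1 + 0 ∈ cube m
        simpa using hq.1
      · show f (q.1 + 0) ≤ q.2 + t
        rw [add_zero]
        exact le_trans hq.2 (le_add_of_nonneg_right ht)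
    have h1 : (x, y) + ((0 : Fin m → ℝ), t) ∈
        convexHull ℝ (epigraph (cube m) f + {((0 : Fin m → ℝ), t)}) := by
      rw [convexHull_add, convexHull_singleton]
      exact Set.add_mem_add hxy rfl
    have h2 := convexHull_mono hsub h1
    simpa using h2
  -- part 2: convexity
  have part2 : ConvexOn ℝ (cube m) (funConvHull (cube m) f) := by
    refine ⟨convex_Icc _ _, ?_⟩
    intro x hx y hy a b ha hb hab
    refine le_of_forall_pos_le_add ?_
    intro ε hε
    have hx_lt : sInf {y' | (x, y') ∈ S} < funConvHull (cube m) f x + ε / 2 := by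
      rw [← hgdef]; linarith [half_pos hε]
    have hy_lt : sInf {y' | (y, y') ∈ S} < funConvHull (cube m) f y + ε / 2 := by
      rw [← hgdef]; linarith [half_pos hε]
    obtain ⟨y₁, hy₁S, hy₁lt⟩ := (csInf_lt_iff (hbdd x) ⟨f x, hne x hx⟩).mp hx_lt
    obtain ⟨y₂, hy₂S, hy₂lt⟩ := (csInf_lt_iff (hbdd y) ⟨f y, hne y hy⟩).mp hy_lt
    have hcomb : (a • x + b • y, a * y₁ + b * y₂) ∈ S := by
      have h := (convex_convexHull ℝ (epigraph (cube m) f)) hy₁S hy₂S ha hb hab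
      simpa [Prod.smul_mk, Prod.mk_add_mk, smul_eq_mul] using h
    refine le_trans (hfib_le _ _ hcomb) ?_
    rw [smul_eq_mul, smul_eq_mul]
    have h1 : a * y₁ ≤ a * (funConvHull (cube m) f x + ε / 2) :=
      mul_le_mul_of_nonneg_left hy₁lt.le ha
    have h2 : b * y₂ ≤ b * (funConvHull (cube m) f y + ε / 2) :=
      mul_le_mul_of_nonneg_left hy₂lt.le hb
    nlinarith [hab]
  -- key monotone transfer
  have hkey : MonotoneOn f (cube m) → ∀ x ∈ cube m, ∀ x' ∈ cube m, x ≤ x' →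
      ∀ y : ℝ, (x', y) ∈ S → (x, y) ∈ S := by
    intro hm x hx x' hx' hle y hy
    set t : Fin m → ℝ := fun j => if x' j = 0 then 0 else x j / x' j with ht
    have hx0 := Set.mem_Icc.mp hx
    have hx'0 := Set.mem_Icc.mp hx'
    have ht0 : ∀ j, 0 ≤ t j := by
      intro j
      rw [ht]; dsimp only
      split_ifs with h
      · exact le_refl 0
      · exact div_nonneg (hx0.1 j) (hx'0.1 j)
    have ht1 : ∀ j, t j ≤ 1 := by
      intro j
      rw [ht]; dsimp only
      split_ifs with h
      · exact zero_le_one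
      · have hpos : 0 < x' j := lt_of_le_of_ne (hx'0.1 j) (Ne.symm h)
        exact (div_le_one hpos).mpr (hle j)
    set T : (Fin m → ℝ) × ℝ →ₗ[ℝ] (Fin m → ℝ) × ℝ :=
      LinearMap.prodMap (LinearMap.pi (fun j => t j • LinearMap.proj j)) LinearMap.id with hT
    have hTapp : ∀ q : (Fin m → ℝ) × ℝ, T q = (fun j => t j * q.1 j, q.2) := by
      intro q
      rw [hT]
      rfl
    have hTepi : T '' (epigraph (cube m) f) ⊆ epigraph (cube m) f := by
      rintro _ ⟨q, hq, rfl⟩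
      rw [hTapp]
      have hq1 := Set.mem_Icc.mp hq.1
      have hmem : (fun j => t j * q.1 j) ∈ cube m := by
        rw [cube, Set.mem_Icc]
        constructor
        · intro j
          exact mul_nonneg (ht0 j) (hq1.1 j)
        · intro j
          calc t j * q.1 j ≤ 1 * q.1 j :=
                mul_le_mul_of_nonneg_right (ht1 j) (hq1.1 j)
            _ = q.1 j := one_mul _
            _ ≤ 1 := hq1.2 j
      refine ⟨hmem, ?_⟩
      show f (fun j => t j * q.1 j) ≤ q.2
      refine le_trans (hm hmem hq.1 ?_) hq.2
      intro j
      calc t j * q.1 j ≤ 1 * q.1 j := mul_le_mul_of_nonneg_right (ht1 j) (hq1.1 j)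
        _ = q.1 j := one_mul _
    have hT2 : T (x', y) = (x, y) := by
      rw [hTapp]
      refine Prod.ext ?_ rfl
      funext j
      show t j * x' j = x j
      rw [ht]; dsimp only
      split_ifs with h
      · have hx0j : x j = 0 := by
          have h1 := hle j
          rw [h] at h1
          exact le_antisymm h1 (hx0.1 j)
        rw [zero_mul, hx0j]
      · exact div_mul_cancel₀ _ h
    have h2 : T (x', y) ∈ convexHull ℝ (T '' epigraph (cube m) f) := by
      rw [← LinearMap.image_convexHull]
      exact Set.mem_image_of_mem T hy
    have h3 := convexHull_mono hTepi h2
    rw [hT2] at h3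
    exact h3
  -- part 3: monotonicity
  have part3 : MonotoneOn f (cube m) → MonotoneOn (funConvHull (cube m) f) (cube m) := by
    intro hm x hx x' hx' hle
    rw [hgdef, hgdef]
    refine csInf_le_csInf (hbdd x) ⟨f x', hne x' hx'⟩ ?_
    intro y hy
    exact hkey hm x hx x' hx' hle y hy
  refine ⟨hgle, part2, part3, ?_⟩
  -- part 4: continuity
  intro hm hlc
  have hmono := part3 hm
  have h1cube : (1 : Fin m → ℝ) ∈ cube m := Set.mem_Icc.mpr ⟨zero_le_one, le_refl _⟩
  have hfB : ∀ x ∈ cube m, f x ≤ f 1 := fun x hx => hm hx h1cube (Set.mem_Icc.mp hx).2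
  have hB0 : 0 ≤ f 1 := hf_nonneg 1 h1cube
  -- the epigraph is closed
  have hepi : IsClosed (epigraph (cube m) f) := by
    refine isClosed_of_closure_subset ?_
    intro q hq
    have hq1 : q.1 ∈ cube m := by
      have hcl : closure (epigraph (cube m) f) ⊆ (cube m) ×ˢ (Set.univ : Set ℝ) :=
        closure_minimal (fun p hp => ⟨hp.1, trivial⟩) ((isClosed_Icc).prod isClosed_univ)
      exact (hcl hq).1
    refine ⟨hq1, ?_⟩
    by_contra hlt
    push_neg at hlt
    set c := (q.2 + f q.1) / 2 with hc
    have hc1 : q.2 < c := by rw [hc]; linarith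
    have hc2 : c < f q.1 := by rw [hc]; linarith
    have hlow : (c : EReal) < ⨆ δ : {δ : ℝ // 0 < δ},
        ⨅ x : {x : Fin m → ℝ // x ∈ cube m ∧ ‖x - q.1‖ ≤ δ.1}, (f x.1 : EReal) := by
      have := hlc q.1 hq1
      rw [lowerLim] at this
      rw [this]
      exact_mod_cast hc2
    obtain ⟨δ, hδ⟩ := lt_iSup_iff.mp hlow
    have hall : ∀ x : Fin m → ℝ, x ∈ cube m → ‖x - q.1‖ ≤ δ.1 → c < f x := by
      intro x hx hxd
      have h1 : (⨅ x : {x : Fin m → ℝ // x ∈ cube m ∧ ‖x - q.1‖ ≤ δ.1}, (f x.1 : EReal))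
          ≤ (f x : EReal) := iInf_le _ (⟨x, hx, hxd⟩ : {x : Fin m → ℝ // x ∈ cube m ∧ ‖x - q.1‖ ≤ δ.1})
      exact_mod_cast lt_of_lt_of_le hδ h1
    obtain ⟨p, hp, hpd⟩ := Metric.mem_closure_iff.mp hq (min δ.1 (c - q.2))
      (lt_min δ.2 (by linarith))
    rw [Prod.dist_eq] at hpd
    have hd1 : dist q.1 p.1 < δ.1 :=
      lt_of_le_of_lt (le_max_left _ _) (lt_of_lt_of_le hpd (min_le_left _ _))
    have hd2 : dist q.2 p.2 < c - q.2 :=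
      lt_of_le_of_lt (le_max_right _ _) (lt_of_lt_of_le hpd (min_le_right _ _))
    have hc3 : c < f p.1 := by
      refine hall p.1 hp.1 ?_
      rw [← dist_eq_norm, dist_comm]
      exact hd1.le
    have hp2 : p.2 < c := by
      have habs : p.2 - q.2 ≤ |p.2 - q.2| := le_abs_self _
      rw [← Real.dist_eq, dist_comm] at habs
      linarith
    linarith [le_trans hc3.le hp.2]
  -- the compact truncation K
  have hKcl : IsClosed (epigraph (cube m) f ∩ (Set.univ ×ˢ Set.Iic (f 1))) :=
    hepi.inter (isClosed_univ.prod isClosed_Iic)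
  have hKsub : epigraph (cube m) f ∩ (Set.univ ×ˢ Set.Iic (f 1)) ⊆
      Set.Icc ((0 : Fin m → ℝ), (0:ℝ)) (1, f 1) := by
    rintro q ⟨hq, -, hq2⟩
    rw [Set.mem_Icc, Prod.le_def, Prod.le_def]
    exact ⟨⟨(Set.mem_Icc.mp hq.1).1, le_trans (hf_nonneg _ hq.1) hq.2⟩,
      ⟨(Set.mem_Icc.mp hq.1).2, hq2⟩⟩
  have hKcpt : IsCompact (epigraph (cube m) f ∩ (Set.univ ×ˢ Set.Iic (f 1))) :=
    IsCompact.of_isClosed_subset isCompact_Icc hKcl hKsub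
  -- S is the sum of a compact convex hull and a closed ray
  have hSsum : S = convexHull ℝ (epigraph (cube m) f ∩ (Set.univ ×ˢ Set.Iic (f 1))) +
      ({(0 : Fin m → ℝ)} ×ˢ Set.Ici (0:ℝ)) := by
    apply Set.Subset.antisymm
    · refine convexHull_min ?_ ?_
      · intro q hq
        have h1 : (q.1, f q.1) ∈
            convexHull ℝ (epigraph (cube m) f ∩ (Set.univ ×ˢ Set.Iic (f 1))) :=
          subset_convexHull ℝ _ ⟨⟨hq.1, le_refl _⟩, ⟨trivial, hfB _ hq.1⟩⟩
        have h2 : ((0 : Fin m → ℝ), q.2 - f q.1) ∈ ({(0 : Fin m → ℝ)} ×ˢ Set.Ici (0:ℝ)) :=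
          ⟨rfl, sub_nonneg.mpr hq.2⟩
        have h3 := Set.add_mem_add h1 h2
        have heq : (q.1, f q.1) + ((0 : Fin m → ℝ), q.2 - f q.1) = q := by
          rw [Prod.mk_add_mk]
          refine Prod.ext ?_ ?_
          · simp
          · simp
        rwa [heq] at h3
      · exact (convex_convexHull ℝ _).add ((convex_singleton _).prod (convex_Ici _))
    · rintro _ ⟨p, hp, v, hv, rfl⟩
      have hpS : p ∈ S := convexHull_mono Set.inter_subset_left hp
      have hv1 : v.1 = 0 := hv.1
      have hv2 : (0:ℝ) ≤ v.2 := hv.2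
      have heq : p + v = (p.1, p.2 + v.2) := by
        refine Prod.ext ?_ rfl
        show p.1 + v.1 = p.1
        rw [hv1, add_zero]
      show p + v ∈ S
      rw [heq]
      exact hup p.1 p.2 v.2 (by rwa [Prod.mk.eta]) hv2
  have hSc : IsClosed S := by
    rw [hSsum]
    exact IsClosed.add_left_of_isCompact (isClosed_singleton.prod isClosed_Ici)
      (myIsCompact_convexHull hKcpt)
  -- fibers of S are closed; the infimum is attained
  have hfibc : ∀ x : Fin m → ℝ, IsClosed {y | (x, y) ∈ S} :=
    fun x => hSc.preimage (Continuous.prodMk_right x)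
  have hmem_inf : ∀ x ∈ cube m, (x, funConvHull (cube m) f x) ∈ S := by
    intro x hx
    have := (hfibc x).csInf_mem ⟨f x, hne x hx⟩ (hbdd x)
    rwa [← hgdef] at this
  have hfib_Ici : ∀ x ∈ cube m, ∀ y : ℝ, funConvHull (cube m) f x ≤ y → (x, y) ∈ S := by
    intro x hx y hy
    have h := hup x _ (y - funConvHull (cube m) f x) (hmem_inf x hx) (sub_nonneg.mpr hy)
    simpa using h
  -- continuity
  rw [Metric.continuousOn_iff]
  intro xh hxh ε hε
  -- lower estimate via closedness
  have hnotin : xh ∉ {z : Fin m → ℝ | (z, funConvHull (cube m) f xh - ε/2) ∈ S} := by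
    intro hmem
    have := hfib_le _ _ hmem
    linarith [half_pos hε]
  have hAc : IsClosed {z : Fin m → ℝ | (z, funConvHull (cube m) f xh - ε/2) ∈ S} :=
    hSc.preimage (continuous_id.prodMk continuous_const)
  obtain ⟨δ₂, hδ₂pos, hball⟩ := Metric.isOpen_iff.mp hAc.isOpen_compl xh hnotin
  have hlower : ∀ z ∈ cube m, dist z xh < δ₂ →
      funConvHull (cube m) f xh - ε/2 < funConvHull (cube m) f z := by
    intro z hz hdz
    by_contra hcon
    push_neg at hcon
    exact hball (Metric.mem_ball.mpr hdz) (hfib_Ici z hz _ hcon)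
  -- upper estimate via convexity and monotonicity
  set e : Fin m → ℝ := fun j => if xh j < 1 then 1 else 0 with he
  set P := Finset.univ.filter (fun j : Fin m => xh j < 1) with hP
  set δ₀ := if hPne : P.Nonempty then min 1 (P.inf' hPne (fun j => 1 - xh j)) else 1 with hδ₀
  have hδ₀pos : 0 < δ₀ := by
    rw [hδ₀]; split_ifs with h
    · refine lt_min one_pos ?_
      rw [Finset.lt_inf'_iff]
      intro j hj
      rw [hP, Finset.mem_filter] at hj
      linarith [hj.2]
    · exact one_pos
  have hδ₀le : ∀ j, xh j < 1 → δ₀ ≤ 1 - xh j := by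
    intro j hj
    have hjP : j ∈ P := by rw [hP, Finset.mem_filter]; exact ⟨Finset.mem_univ j, hj⟩
    rw [hδ₀]; split_ifs with h
    · exact le_trans (min_le_right _ _) (Finset.inf'_le _ hjP)
    · exact absurd ⟨j, hjP⟩ h
  have hxhm := Set.mem_Icc.mp hxh
  have hcube_pt : ∀ δ : ℝ, 0 ≤ δ → δ ≤ δ₀ → xh + δ • e ∈ cube m := by
    intro δ h0δ hδδ
    rw [cube, Set.mem_Icc]
    constructor
    · intro j
      have h1 : (0:ℝ) ≤ xh j := hxhm.1 j
      show (0:ℝ) ≤ xh j + δ * e j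
      rw [he]; dsimp only
      split_ifs with hj
      · linarith
      · simp only [mul_zero]; linarith
    · intro j
      have h2 : xh j ≤ 1 := hxhm.2 j
      show xh j + δ * e j ≤ 1
      rw [he]; dsimp only
      split_ifs with hj
      · have := hδ₀le j hj
        linarith
      · simp only [mul_zero]; linarith
  have hz₀c : xh + δ₀ • e ∈ cube m := hcube_pt δ₀ hδ₀pos.le (le_refl _)
  have hgz₀ : funConvHull (cube m) f (xh + δ₀ • e) ≤ f 1 :=
    le_trans (hgle _ hz₀c) (hfB _ hz₀c)
  have hup_est : ∀ δ : ℝ, 0 < δ → δ ≤ δ₀ →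
      funConvHull (cube m) f (xh + δ • e) ≤ funConvHull (cube m) f xh + (δ/δ₀) * f 1 := by
    intro δ h0δ hδδ
    have hb : 0 ≤ δ/δ₀ := div_nonneg h0δ.le hδ₀pos.le
    have ha : 0 ≤ 1 - δ/δ₀ := by
      have : δ/δ₀ ≤ 1 := (div_le_one hδ₀pos).mpr hδδ
      linarith
    have hsum : (1 - δ/δ₀) + δ/δ₀ = 1 := by ring
    have hcvx := part2.2 hxh hz₀c ha hb hsum
    have hptr : (1 - δ/δ₀) • xh + (δ/δ₀) • (xh + δ₀ • e) = xh + δ • e := by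
      funext j
      simp only [Pi.add_apply, Pi.smul_apply, smul_eq_mul]
      field_simp
      ring
    rw [hptr] at hcvx
    refine le_trans hcvx ?_
    rw [smul_eq_mul, smul_eq_mul]
    have h1 : (δ/δ₀) * funConvHull (cube m) f (xh + δ₀ • e) ≤ (δ/δ₀) * f 1 :=
      mul_le_mul_of_nonneg_left hgz₀ hb
    have h2 : 0 ≤ (δ/δ₀) * funConvHull (cube m) f xh := mul_nonneg hb (hg0 xh hxh)
    nlinarith
  -- choose the final δ
  refine ⟨min δ₂ (min δ₀ (δ₀ * ε / (2 * (f 1 + 1)))), lt_min hδ₂pos (lt_min hδ₀pos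
    (by positivity)), ?_⟩
  intro x hxc hdx
  have hd₂ : dist x xh < δ₂ := lt_of_lt_of_le hdx (min_le_left _ _)
  have hlow := hlower x hxc hd₂
  set δ' := min δ₀ (δ₀ * ε / (2 * (f 1 + 1))) with hδ'
  have hδ'pos : 0 < δ' := lt_min hδ₀pos (by positivity)
  have hδ'le : δ' ≤ δ₀ := min_le_left _ _
  have hdx' : dist x xh ≤ δ' := le_trans hdx.le (min_le_right _ _)
  have hxle : x ≤ xh + δ' • e := by
    intro j
    have hdj : dist (x j) (xh j) ≤ dist x xh := dist_le_pi_dist x xh j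
    have habs : x j - xh j ≤ δ' := by
      have := le_abs_self (x j - xh j)
      rw [← Real.dist_eq] at this
      linarith [le_trans hdj hdx']
    show x j ≤ xh j + δ' * e j
    rw [he]; dsimp only
    split_ifs with hj
    · linarith
    · have hx1 : x j ≤ 1 := (Set.mem_Icc.mp hxc).2 j
      have : (1:ℝ) ≤ xh j := not_lt.mp hj
      simp only [mul_zero]
      linarith
  have hgx_up : funConvHull (cube m) f x ≤ funConvHull (cube m) f xh + (δ'/δ₀) * f 1 :=
    le_trans (hmono hxc (hcube_pt δ' hδ'pos.le hδ'le) hxle) (hup_est δ' hδ'pos hδ'le)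
  have hfrac : (δ'/δ₀) * f 1 ≤ ε/2 := by
    have hδ'le2 : δ' ≤ δ₀ * ε / (2 * (f 1 + 1)) := min_le_right _ _
    have h1 : δ'/δ₀ ≤ ε / (2 * (f 1 + 1)) := by
      rw [div_le_iff₀ hδ₀pos]
      calc δ' ≤ δ₀ * ε / (2 * (f 1 + 1)) := hδ'le2
        _ = ε / (2 * (f 1 + 1)) * δ₀ := by ring
    calc (δ'/δ₀) * f 1 ≤ (ε / (2 * (f 1 + 1))) * f 1 :=
          mul_le_mul_of_nonneg_right h1 hB0
      _ ≤ ε/2 := by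
          rw [div_mul_eq_mul_div, div_le_div_iff₀ (by positivity) (by norm_num : (0:ℝ) < 2)]
          nlinarith
  rw [Real.dist_eq, abs_lt]
  constructor <;> linarith

end
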